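/- A necessary and sufficient condition for vanishing deformation velocity d = h_u(k)h_u = 0 is k = (1/e)·{a ⊗ u + u ⊗ (g(u))(k)} − (1/e²)·g(u,a)·u ⊗ u, where a := k(g(u)) (i.e. a^i = k^{ij} g_{jm} u^m) and g(u,a) = (g(u))(k)(g(u)). -/

import Mathlib

open Finset

/-- Necessary and sufficient condition for vanishing deformation velocity:
d = h_u(k)h_u = 0 iff
k^{ij} = (1/e)·(a^i u^j + u^i (g(u))(k)^j) − (1/e²)·g(u,a)·u^i u^j,
where a^i = k^{ij} g_{jm} u^m and g(u,a) = (g(u))(k)(g(u)). -/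
theorem stmt14 (n : ℕ) (glow ginv : Fin n → Fin n → ℝ) (u : Fin n → ℝ)
    (hsym : ∀ i j, glow i j = glow j i)
    (hinv : ∀ i m, ∑ j, glow i j * ginv j m = if i = m then (1:ℝ) else 0)
    (hinv' : ∀ i m, ∑ j, ginv i j * glow j m = if i = m then (1:ℝ) else 0)
    (e : ℝ) (hedef : e = ∑ i, ∑ j, glow i j * u i * u j) (he : e ≠ 0)
    (k : Fin n → Fin n → ℝ)
    (hu : Fin n → Fin n → ℝ)
    (hhu : ∀ i j, hu i j = glow i j -
        (1/e) * (∑ m, glow i m * u m) * (∑ m, glow j m * u m)) :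
    (∀ i j, ∑ m, ∑ p, hu i m * k m p * hu p j = 0) ↔
    (∀ i j, k i j =
        (1/e) * ((∑ m, k i m * (∑ p, glow m p * u p)) * u j
          + u i * (∑ m, (∑ p, glow m p * u p) * k m j))
        - (1/e^2) * (∑ m, (∑ p, glow m p * u p) *
            (∑ q, k m q * (∑ p, glow q p * u p))) * (u i * u j)) := by
  set w : Fin n → ℝ := fun i => ∑ p, glow i p * u p with hwdef
  have hwu : ∑ m, w m * u m = e := by
    rw [hedef]
    simp only [hwdef, Finset.sum_mul]
    exact Finset.sum_congr rfl fun m _ => Finset.sum_congr rfl fun p _ => by ring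
  have hhu' : ∀ i j, hu i j = glow i j - (1/e) * w i * w j := fun i j => hhu i j
  have huu : ∀ i, ∑ m, hu i m * u m = 0 := by
    intro i
    have h1 : ∑ m, hu i m * u m
        = (∑ m, glow i m * u m) - (1/e) * w i * (∑ m, w m * u m) := by
      simp only [hhu', sub_mul, Finset.sum_sub_distrib, Finset.mul_sum]
      congr 1
      exact Finset.sum_congr rfl fun m _ => by ring
    rw [h1, hwu]
    have h2 : (∑ m, glow i m * u m) = w i := rfl
    rw [h2]; field_simp; ring
  have husym : ∀ i j, hu i j = hu j i := by
    intro i j; rw [hhu' i j, hhu' j i, hsym i j]; ring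
  have huu' : ∀ j, ∑ m, u m * hu m j = 0 := by
    intro j
    rw [← huu j]
    exact Finset.sum_congr rfl fun m _ => by rw [husym m j]; ring
  have hginvw : ∀ i, ∑ r, ginv i r * w r = u i := by
    intro i
    have h1 : ∑ r, ginv i r * w r = ∑ p, (∑ r, ginv i r * glow r p) * u p := by
      simp only [hwdef, Finset.mul_sum, Finset.sum_mul]
      rw [Finset.sum_comm]
      exact Finset.sum_congr rfl fun p _ => Finset.sum_congr rfl fun r _ => by ring
    rw [h1]
    simp [hinv']
  have hwginv : ∀ j, ∑ s, w s * ginv s j = u j := by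
    intro j
    have h1 : ∑ s, w s * ginv s j = ∑ q, (∑ s, glow q s * ginv s j) * u q := by
      simp only [hwdef, Finset.mul_sum, Finset.sum_mul]
      rw [Finset.sum_comm]
      exact Finset.sum_congr rfl fun q _ => Finset.sum_congr rfl fun s _ => by
        rw [hsym s q]; ring
    rw [h1]
    simp [hinv]
  have hP : ∀ i m, ∑ r, ginv i r * hu r m
      = (if i = m then (1:ℝ) else 0) - (1/e) * u i * w m := by
    intro i m
    have h1 : ∑ r, ginv i r * hu r m
        = (∑ r, ginv i r * glow r m) - (1/e) * (∑ r, ginv i r * w r) * w m := by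
      simp only [hhu', mul_sub, Finset.sum_sub_distrib, Finset.sum_mul, Finset.mul_sum]
      congr 1
      exact Finset.sum_congr rfl fun r _ => by ring
    rw [h1, hinv', hginvw]
  have hQ : ∀ p j, ∑ s, hu p s * ginv s j
      = (if p = j then (1:ℝ) else 0) - (1/e) * w p * u j := by
    intro p j
    have h1 : ∑ s, hu p s * ginv s j
        = (∑ s, glow p s * ginv s j) - (1/e) * w p * (∑ s, w s * ginv s j) := by
      simp only [hhu', sub_mul, Finset.sum_sub_distrib, Finset.sum_mul, Finset.mul_sum]
      congr 1
      exact Finset.sum_congr rfl fun s _ => by ring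
    rw [h1, hinv, hwginv]
  constructor
  · intro hd i j
    -- Step 1: contract the vanishing of d on the right with ginv
    have c1 : ∀ r, ∑ m, hu r m * (k m j - (1/e) * (∑ p, k m p * w p) * u j) = 0 := by
      intro r
      have h0 : ∑ s, (∑ m, ∑ p, hu r m * k m p * hu p s) * ginv s j = 0 := by
        simp [hd]
      have h1 : ∑ s, (∑ m, ∑ p, hu r m * k m p * hu p s) * ginv s j
          = ∑ m, ∑ p, hu r m * k m p * (∑ s, hu p s * ginv s j) := by
        simp only [Finset.sum_mul, Finset.mul_sum]
        rw [Finset.sum_comm]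
        refine Finset.sum_congr rfl fun m _ => ?_
        rw [Finset.sum_comm]
        exact Finset.sum_congr rfl fun p _ => Finset.sum_congr rfl fun s _ => by ring
      rw [h1] at h0
      have h2 : ∑ m, ∑ p, hu r m * k m p * (∑ s, hu p s * ginv s j)
          = ∑ m, hu r m * (k m j - (1/e) * (∑ p, k m p * w p) * u j) := by
        refine Finset.sum_congr rfl fun m _ => ?_
        simp only [hQ]
        have hterm : ∀ p, hu r m * k m p * ((if p = j then (1:ℝ) else 0) - 1/e * w p * u j)
            = (if p = j then hu r m * k m p else 0)
              - (1/e * u j * hu r m) * (k m p * w p) := by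
          intro p; split <;> ring
        simp only [hterm, Finset.sum_sub_distrib, ← Finset.mul_sum,
          Finset.sum_ite_eq', Finset.mem_univ, if_true]
        ring
      rw [h2] at h0
      exact h0
    -- Step 2: contract on the left with ginv
    have h0 : ∑ r, ginv i r * (∑ m, hu r m * (k m j - (1/e) * (∑ p, k m p * w p) * u j)) = 0 := by
      simp only [c1, mul_zero, Finset.sum_const_zero]
    have h1 : ∑ r, ginv i r * (∑ m, hu r m * (k m j - (1/e) * (∑ p, k m p * w p) * u j))
        = ∑ m, (∑ r, ginv i r * hu r m) * (k m j - (1/e) * (∑ p, k m p * w p) * u j) := by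
      simp only [Finset.sum_mul, Finset.mul_sum]
      rw [Finset.sum_comm]
      exact Finset.sum_congr rfl fun m _ => Finset.sum_congr rfl fun r _ => by ring
    rw [h1] at h0
    simp only [hP] at h0
    have hterm2 : ∀ m, ((if i = m then (1:ℝ) else 0) - 1/e * u i * w m)
        * (k m j - 1/e * (∑ p, k m p * w p) * u j)
        = ((if i = m then k m j - 1/e * (∑ p, k m p * w p) * u j else 0)
          - (1/e * u i) * (w m * k m j)
          + (1/e * (1/e) * u i * u j) * (w m * (∑ p, k m p * w p))) := by
      intro m; split <;> ring
    rw [Finset.sum_congr rfl (fun m _ => hterm2 m)] at h0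
    simp only [Finset.sum_add_distrib, Finset.sum_sub_distrib, ← Finset.mul_sum,
      Finset.sum_ite_eq, Finset.mem_univ, if_true] at h0
    show k i j = (1/e) * ((∑ m, k i m * w m) * u j + u i * (∑ m, w m * k m j))
        - (1/e^2) * (∑ m, w m * (∑ q, k m q * w q)) * (u i * u j)
    have hab : (∑ p, k i p * w p) = (∑ m, k i m * w m) := rfl
    have hcc : (∑ m, w m * (∑ p, k m p * w p)) = (∑ m, w m * (∑ q, k m q * w q)) := rfl
    rw [hab, hcc] at h0
    have hee : e ^ 2 ≠ 0 := pow_ne_zero _ he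
    field_simp at h0 ⊢
    linarith [h0]
  · intro hk i j
    have hk' : ∀ m p, k m p = (1/e) * ((∑ q, k m q * w q) * u p + u m * (∑ q, w q * k q p))
        - (1/e^2) * (∑ q, w q * (∑ r, k q r * w r)) * (u m * u p) := fun m p => hk m p
    have inner : ∀ m, ∑ p, hu i m * k m p * hu p j
        = (1/e) * ((∑ q, k m q * w q) * hu i m) * (∑ p, u p * hu p j)
          + (hu i m * u m) * (∑ p, (1/e) * (∑ q, w q * k q p) * hu p j)
          - (1/e^2) * (∑ q, w q * (∑ r, k q r * w r))
              * ((hu i m * u m) * (∑ p, u p * hu p j)) := by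
      intro m
      have hterm : ∀ p, hu i m * k m p * hu p j
          = (1/e) * ((∑ q, k m q * w q) * hu i m) * (u p * hu p j)
            + (hu i m * u m) * ((1/e) * (∑ q, w q * k q p) * hu p j)
            - (1/e^2) * (∑ q, w q * (∑ r, k q r * w r))
                * ((hu i m * u m) * (u p * hu p j)) := by
        intro p; rw [hk' m p]; ring
      simp only [hterm, Finset.sum_add_distrib, Finset.sum_sub_distrib, ← Finset.mul_sum]
    rw [Finset.sum_congr rfl (fun m _ => inner m)]
    simp only [huu' j, mul_zero, zero_add, add_zero, sub_zero, zero_mul]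
    rw [← Finset.sum_mul, huu i, zero_mul]
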